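/- Let P be a bounded primary Puiseux monoid with no stable atoms (i.e., for each m ∈ ℕ only finitely many atoms have numerator m). Then ρ_k(P) < ∞ for every k ∈ ℕ. -/
import Mathlib


/-- A Puiseux monoid: an additive submonoid of ℚ consisting of nonnegative rationals. -/
def PM.Puiseux (P : AddSubmonoid ℚ) : Prop := ∀ x ∈ P, 0 ≤ x

/-- `a` is an atom of `P`. -/
def PM.IsAtom (P : AddSubmonoid ℚ) (a : ℚ) : Prop :=
  a ∈ P ∧ a ≠ 0 ∧ ∀ x ∈ P, ∀ y ∈ P, a = x + y → x = 0 ∨ y = 0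

/-- A factorization of `x` is a multiset of atoms of `P` summing to `x`. -/
def PM.IsFactorization (P : AddSubmonoid ℚ) (x : ℚ) (z : Multiset ℚ) : Prop :=
  (∀ a ∈ z, PM.IsAtom P a) ∧ z.sum = x

/-- The set of lengths of `x`. -/
def PM.Lengths (P : AddSubmonoid ℚ) (x : ℚ) : Set ℕ :=
  {n | ∃ z : Multiset ℚ, PM.IsFactorization P x z ∧ Multiset.card z = n}

/-- `P` is atomic: it is generated by its set of atoms. -/
def PM.Atomic (P : AddSubmonoid ℚ) : Prop :=
  AddSubmonoid.closure {a | PM.IsAtom P a} = P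

/-- The union of sets of lengths `U_k(P)`. -/
def PM.U (P : AddSubmonoid ℚ) (k : ℕ) : Set ℕ :=
  {l | ∃ x ∈ P, k ∈ PM.Lengths P x ∧ l ∈ PM.Lengths P x}

/-- `P` is a primary Puiseux monoid. -/
def PM.Primary (P : AddSubmonoid ℚ) : Prop :=
  ∃ A : Set ℚ, (∀ a ∈ A, 0 < a) ∧ AddSubmonoid.closure A = P ∧
    (∀ a ∈ A, (a.den).Prime) ∧
    ∀ a ∈ A, ∀ b ∈ A, a ≠ b → a.den ≠ b.den


section Helpers

/-- Every atom of a monoid generated by positive elements lies in the generating set. -/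
lemma PMaux.atom_mem {P : AddSubmonoid ℚ} {A : Set ℚ} (hA0 : ∀ a ∈ A, 0 < a)
    (hcl : AddSubmonoid.closure A = P) {a : ℚ} (ha : PM.IsAtom P a) : a ∈ A := by
  obtain ⟨haP, hane, hirr⟩ := ha
  rw [← hcl] at haP
  obtain ⟨m, hm, hsum⟩ := AddSubmonoid.exists_multiset_of_mem_closure haP
  rcases Multiset.empty_or_exists_mem m with h0 | ⟨b, hb⟩
  · subst h0; simp at hsum; exact absurd hsum.symm hane
  · have hm' : m = b ::ₘ (m.erase b) := (Multiset.cons_erase hb).symm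
    have hbP : b ∈ P := by rw [← hcl]; exact AddSubmonoid.subset_closure (hm b hb)
    have htP : (m.erase b).sum ∈ P := by
      rw [← hcl]
      exact AddSubmonoid.multiset_sum_mem _ _ fun y hy =>
        AddSubmonoid.subset_closure (hm y (Multiset.mem_of_mem_erase hy))
    have heq : a = b + (m.erase b).sum := by
      rw [← hsum, ← Multiset.sum_cons, Multiset.cons_erase hb]
    rcases hirr b hbP _ htP heq with h | h
    · exact absurd h.symm (ne_of_lt (hA0 b (hm b hb)))
    · rw [h, add_zero] at heq; rw [heq]; exact hm b hb

/-- Denominator of a sum of rationals with denominators coprime to `q` is coprime to `q`. -/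
lemma PMaux.sum_den_coprime {q : ℕ} (s : Multiset ℚ)
    (h : ∀ r ∈ s, Nat.Coprime r.den q) : Nat.Coprime s.sum.den q := by
  induction s using Multiset.induction with
  | empty => simpa using Nat.coprime_one_left q
  | cons b t ih =>
    rw [Multiset.sum_cons]
    exact Nat.Coprime.coprime_dvd_left (Rat.add_den_dvd b t.sum)
      (Nat.Coprime.mul (h b (Multiset.mem_cons_self b t))
        (ih fun r hr => h r (Multiset.mem_cons_of_mem hr)))

end Helpers

lemma PMaux.count_cong {P : AddSubmonoid ℚ}
    (hden : ∀ b, PM.IsAtom P b → b.den.Prime)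
    (hdist : ∀ b c, PM.IsAtom P b → PM.IsAtom P c → b ≠ c → b.den ≠ c.den)
    {z z' : Multiset ℚ} (hz : ∀ b ∈ z, PM.IsAtom P b) (hz' : ∀ b ∈ z', PM.IsAtom P b)
    (hsum : z.sum = z'.sum) {a : ℚ} (ha : PM.IsAtom P a) :
    ((a.den : ℤ)) ∣ (Multiset.count a z : ℤ) - (Multiset.count a z' : ℤ) := by
  classical
  have hq : a.den.Prime := hden a ha
  have split : ∀ w : Multiset ℚ, (∀ b ∈ w, PM.IsAtom P b) →
      w.sum = (Multiset.count a w : ℚ) * a + (Multiset.filter (fun b => ¬ a = b) w).sum ∧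
      Nat.Coprime (Multiset.filter (fun b => ¬ a = b) w).sum.den a.den := by
    intro w hw
    constructor
    · conv_lhs => rw [← Multiset.filter_add_not (fun b => a = b) w]
      rw [Multiset.sum_add, Multiset.filter_eq, Multiset.sum_replicate, nsmul_eq_mul]
    · apply PMaux.sum_den_coprime
      intro r hr
      rw [Multiset.mem_filter] at hr
      have hr' := hw r hr.1
      have hne : r.den ≠ a.den := hdist r a hr' ha (fun e => hr.2 e.symm)
      exact (Nat.coprime_primes (hden r hr') hq).mpr hne
  obtain ⟨e1, c1⟩ := split z hz
  obtain ⟨e2, c2⟩ := split z' hz'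
  set s : ℚ := (Multiset.filter (fun b => ¬ a = b) z).sum with hs
  set s' : ℚ := (Multiset.filter (fun b => ¬ a = b) z').sum with hs'
  set c : ℕ := Multiset.count a z with hc
  set c' : ℕ := Multiset.count a z' with hc'
  have key : ((c : ℚ) - (c' : ℚ)) * a = s' - s := by
    rw [e1, e2] at hsum; linarith
  have hq0 : (a.den : ℚ) ≠ 0 := Nat.cast_ne_zero.mpr hq.pos.ne'
  have haq : a * (a.den : ℚ) = (a.num : ℚ) := ((div_eq_iff hq0).mp (Rat.num_div_den a)).symm
  set T : ℤ := ((c : ℤ) - (c' : ℤ)) * a.num with hT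
  have keyT : (T : ℚ) = (s' - s) * a.den := by
    push_cast [hT]
    rw [← haq, ← key]; ring
  have hr : s' - s = (T : ℚ) / (a.den : ℚ) := by
    rw [keyT]; field_simp
  -- denominator of s' - s is coprime to a.den
  have hcop : Nat.Coprime (s' - s).den a.den := by
    have hdvd : (s' - s).den ∣ s'.den * (-s).den := by
      have := Rat.add_den_dvd s' (-s)
      simpa [sub_eq_add_neg] using this
    rw [Rat.neg_den] at hdvd
    exact Nat.Coprime.coprime_dvd_left hdvd (Nat.Coprime.mul c2 c1)
  -- but s' - s = T /. a.den, whose den divides a.den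
  have hdvd2 : ((s' - s).den : ℤ) ∣ (a.den : ℤ) := by
    have h2 : s' - s = Rat.divInt T (a.den : ℤ) := by
      rw [Rat.divInt_eq_div, hr]; norm_cast
    rw [h2]; exact Rat.den_dvd T (a.den : ℤ)
  have hden1 : (s' - s).den = 1 :=
    Nat.Coprime.eq_one_of_dvd hcop (Int.ofNat_dvd.mp hdvd2)
  have hint : ((s' - s).num : ℚ) = s' - s := (Rat.den_eq_one_iff _).mp hden1
  have hTeq : T = (s' - s).num * a.den := by
    have : (T : ℚ) = (((s' - s).num * a.den : ℤ) : ℚ) := by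
      push_cast
      rw [hint, keyT]
    exact_mod_cast this
  have hqT : (a.den : ℤ) ∣ T := Dvd.intro _ (by linarith [hTeq])
  have hqprime : Prime (a.den : ℤ) := Nat.prime_iff_prime_int.mp hq
  have hnum : ¬ (a.den : ℤ) ∣ a.num := by
    intro hdv
    have h1 : a.den ∣ a.num.natAbs := Int.ofNat_dvd.mp (Int.dvd_natAbs.mpr hdv)
    exact hq.one_lt.ne' (Nat.Coprime.eq_one_of_dvd a.reduced.symm h1)
  rcases (hqprime.dvd_mul.mp (hT ▸ hqT)) with h | h
  · exact h
  · exact absurd h hnum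

theorem stmt14 (P : AddSubmonoid ℚ) (hprim : PM.Primary P)
    (hbdd : BddAbove {a : ℚ | PM.IsAtom P a})
    (hnostable : ∀ m : ℤ, {a : ℚ | PM.IsAtom P a ∧ a.num = m}.Finite) :
    ∀ k : ℕ, (PM.U P k).Finite := by
  classical
  obtain ⟨A, hA0, hcl, hAden, hAdist⟩ := hprim
  have hmem : ∀ a, PM.IsAtom P a → a ∈ A := fun a ha => PMaux.atom_mem hA0 hcl ha
  have hpos : ∀ a, PM.IsAtom P a → 0 < a := fun a ha => hA0 a (hmem a ha)
  have hden : ∀ b, PM.IsAtom P b → b.den.Prime := fun a ha => hAden a (hmem a ha)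
  have hdist : ∀ a b, PM.IsAtom P a → PM.IsAtom P b → a ≠ b → a.den ≠ b.den :=
    fun a b ha hb hne => hAdist a (hmem a ha) b (hmem b hb) hne
  obtain ⟨M, hM⟩ := hbdd
  intro k
  set N : ℤ := ⌈(k : ℚ) * M⌉ with hN
  have hFfin : {b : ℚ | PM.IsAtom P b ∧ b.num ≤ N}.Finite := by
    apply Set.Finite.subset
      (Set.Finite.biUnion (Set.finite_Icc (1 : ℤ) N) (fun m _ => hnostable m))
    rintro b ⟨hb, hbn⟩
    have h1 : 1 ≤ b.num := by
      have h0 : 0 < b.num := Rat.num_pos.mpr (hpos b hb)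
      omega
    exact Set.mem_biUnion (Set.mem_Icc.mpr ⟨h1, hbn⟩) ⟨hb, rfl⟩
  set Ffin : Finset ℚ := hFfin.toFinset with hFdef
  set δ : ℚ := if h : Ffin.Nonempty then Ffin.min' h else 1 with hδdef
  have hδpos : 0 < δ := by
    rw [hδdef]; split_ifs with h
    · have hmm : Ffin.min' h ∈ Ffin := Finset.min'_mem _ h
      have hmm' := (Set.Finite.mem_toFinset hFfin).mp hmm
      exact hpos _ hmm'.1
    · exact one_pos
  have hδle : ∀ b ∈ Ffin, δ ≤ b := by
    intro b hb
    have hne : Ffin.Nonempty := ⟨b, hb⟩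
    rw [hδdef, dif_pos hne]
    exact Finset.min'_le _ _ hb
  set C : ℕ := (⌈(k : ℚ) * M / δ⌉).toNat with hC
  apply Set.Finite.subset (Set.finite_Iic (k + Ffin.card * C))
  rintro l ⟨x, hxP, ⟨z, ⟨hz, hzsum⟩, hzcard⟩, ⟨z', ⟨hz', hz'sum⟩, hz'card⟩⟩
  simp only [Set.mem_Iic]
  have hxle : x ≤ (k : ℚ) * M := by
    have h := Multiset.sum_le_card_nsmul z M (fun b hb => hM (hz b hb))
    rwa [hzsum, hzcard, nsmul_eq_mul] at h
  have hcount_le : ∀ a : ℚ, (Multiset.count a z' : ℚ) * a ≤ x := by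
    intro a
    have hsplit : z'.sum = (Multiset.count a z' : ℚ) * a
        + (Multiset.filter (fun b => ¬ a = b) z').sum := by
      conv_lhs => rw [← Multiset.filter_add_not (fun b => a = b) z']
      rw [Multiset.sum_add, Multiset.filter_eq, Multiset.sum_replicate, nsmul_eq_mul]
    have hnn : 0 ≤ (Multiset.filter (fun b => ¬ a = b) z').sum :=
      Multiset.sum_nonneg (fun r hr =>
        le_of_lt (hpos r (hz' r (Multiset.mem_of_mem_filter hr))))
    rw [← hz'sum, hsplit]; linarith
  have hkey : ∀ a ∈ z'.toFinset, ¬ (Multiset.count a z' ≤ Multiset.count a z) →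
      a ∈ Ffin ∧ Multiset.count a z' ≤ C := by
    intro a haz hle
    have haatom : PM.IsAtom P a := hz' a (Multiset.mem_toFinset.mp haz)
    push_neg at hle
    have hcong := PMaux.count_cong hden hdist hz hz' (hzsum.trans hz'sum.symm) haatom
    have hdvd' : (a.den : ℤ) ∣ ((Multiset.count a z' : ℤ) - (Multiset.count a z : ℤ)) := by
      have h' := (dvd_neg).mpr hcong
      rwa [neg_sub] at h'
    have hdle : (a.den : ℤ) ≤ (Multiset.count a z' : ℤ) - (Multiset.count a z : ℤ) := by
      apply Int.le_of_dvd _ hdvd'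
      have h'' : (Multiset.count a z : ℤ) < (Multiset.count a z' : ℤ) := by exact_mod_cast hle
      omega
    have hdle' : (a.den : ℚ) ≤ (Multiset.count a z' : ℚ) := by
      have h1 : (a.den : ℤ) ≤ (Multiset.count a z' : ℤ) := by omega
      exact_mod_cast h1
    have hnum_le : (a.num : ℚ) ≤ (k : ℚ) * M := by
      have hq0 : (a.den : ℚ) ≠ 0 := Nat.cast_ne_zero.mpr (hden a haatom).pos.ne'
      have h2 : (a.num : ℚ) = (a.den : ℚ) * a := by
        rw [mul_comm]
        exact ((div_eq_iff hq0).mp (Rat.num_div_den a)).symm.symm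
      have h3 : (a.den : ℚ) * a ≤ (Multiset.count a z' : ℚ) * a :=
        mul_le_mul_of_nonneg_right hdle' (le_of_lt (hpos a haatom))
      calc (a.num : ℚ) = (a.den : ℚ) * a := h2
        _ ≤ (Multiset.count a z' : ℚ) * a := h3
        _ ≤ x := hcount_le a
        _ ≤ (k : ℚ) * M := hxle
    have haF : a ∈ Ffin := by
      rw [hFdef, Set.Finite.mem_toFinset]
      refine ⟨haatom, ?_⟩
      have h5 : (a.num : ℚ) ≤ (N : ℚ) := le_trans hnum_le (Int.le_ceil _)
      exact_mod_cast h5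
    refine ⟨haF, ?_⟩
    have h4 : (Multiset.count a z' : ℚ) * δ ≤ (k : ℚ) * M := by
      have h4a := mul_le_mul_of_nonneg_left (hδle a haF)
        (by positivity : (0 : ℚ) ≤ (Multiset.count a z' : ℚ))
      exact le_trans h4a (le_trans (hcount_le a) hxle)
    have h5 : (Multiset.count a z' : ℚ) ≤ (k : ℚ) * M / δ := (le_div_iff₀ hδpos).mpr h4
    have h7 : (Multiset.count a z' : ℤ) ≤ ⌈(k : ℚ) * M / δ⌉ := by
      have h6 : ((Multiset.count a z' : ℤ) : ℚ) ≤ ((⌈(k : ℚ) * M / δ⌉ : ℤ) : ℚ) := by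
        push_cast
        exact le_trans h5 (Int.le_ceil _)
      exact_mod_cast h6
    rw [hC]; omega
  rw [← hz'card, ← Multiset.toFinset_sum_count_eq,
    ← Finset.sum_filter_add_sum_filter_not z'.toFinset
      (fun a => Multiset.count a z' ≤ Multiset.count a z) (fun a => Multiset.count a z')]
  have hsub : z'.toFinset.filter (fun a => Multiset.count a z' ≤ Multiset.count a z)
      ⊆ z.toFinset := by
    intro a ha
    obtain ⟨haz, hle⟩ := Finset.mem_filter.mp ha
    rw [Multiset.mem_toFinset, ← Multiset.count_pos] at haz ⊢
    omega
  have h1 : (∑ a ∈ z'.toFinset.filter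
      (fun a => Multiset.count a z' ≤ Multiset.count a z), Multiset.count a z') ≤ k := by
    have s1 : (∑ a ∈ z'.toFinset.filter
        (fun a => Multiset.count a z' ≤ Multiset.count a z), Multiset.count a z')
        ≤ ∑ a ∈ z'.toFinset.filter
          (fun a => Multiset.count a z' ≤ Multiset.count a z), Multiset.count a z :=
      Finset.sum_le_sum (fun a ha => (Finset.mem_filter.mp ha).2)
    have s2 : (∑ a ∈ z'.toFinset.filter
        (fun a => Multiset.count a z' ≤ Multiset.count a z), Multiset.count a z)
        ≤ ∑ a ∈ z.toFinset, Multiset.count a z :=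
      Finset.sum_le_sum_of_subset hsub
    have s3 := Multiset.toFinset_sum_count_eq z
    omega
  have hsub2 : z'.toFinset.filter (fun a => ¬ Multiset.count a z' ≤ Multiset.count a z)
      ⊆ Ffin := by
    intro a ha
    obtain ⟨haz, hle⟩ := Finset.mem_filter.mp ha
    exact (hkey a haz hle).1
  have h2 : (∑ a ∈ z'.toFinset.filter
      (fun a => ¬ Multiset.count a z' ≤ Multiset.count a z), Multiset.count a z')
      ≤ Ffin.card * C := by
    have s1 : (∑ a ∈ z'.toFinset.filter
        (fun a => ¬ Multiset.count a z' ≤ Multiset.count a z), Multiset.count a z')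
        ≤ ∑ _a ∈ z'.toFinset.filter
          (fun a => ¬ Multiset.count a z' ≤ Multiset.count a z), C :=
      Finset.sum_le_sum (fun a ha =>
        (hkey a (Finset.mem_of_mem_filter a ha) (Finset.mem_filter.mp ha).2).2)
    have s2 : (∑ _a ∈ z'.toFinset.filter
        (fun a => ¬ Multiset.count a z' ≤ Multiset.count a z), C) ≤ ∑ _a ∈ Ffin, C :=
      Finset.sum_le_sum_of_subset hsub2
    have s3 : (∑ _a ∈ Ffin, C) = Ffin.card * C := by
      rw [Finset.sum_const, smul_eq_mul]
    omega
  omega
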